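/- arXiv:1811.11056 — 2 statements merged into one kernel-verified Lean document; each statement's English description precedes it below -/
import Mathlib

section
/- If α₁ = 1 and α₂ = 2, then ∫₀^{2π} √(κ₁(t)² + κ₂(t)² + κ₃(t)²)·‖x′(t)‖ dt = 2√5·π, where κ₁, κ₂, κ₃ are the first three Frenet curvatures of x; hence the lower bound 2√5·π for this integral over closed curves of constant curvatures in ℝ⁴ is attained. -/
open Real intervalIntegral

/-- The curve `x(t) = (a₁ cos(α₁ t), a₁ sin(α₁ t), a₂ cos(α₂ t), a₂ sin(α₂ t))` in `ℝ⁴`. -/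
noncomputable def curveX (a₁ a₂ α₁ α₂ : ℝ) : ℝ → EuclideanSpace ℝ (Fin 4) :=
  fun t => (WithLp.equiv 2 (Fin 4 → ℝ)).symm
    ![a₁ * Real.cos (α₁ * t), a₁ * Real.sin (α₁ * t),
      a₂ * Real.cos (α₂ * t), a₂ * Real.sin (α₂ * t)]

/-- `D_j(t)`: the determinant of the `j × j` Gram matrix whose `(a,b)` entry is the inner
product of the `a`-th and `b`-th derivatives of `y` at `t` (`1 ≤ a, b ≤ j`); `D₀ = 1`. -/
noncomputable def gramDet {n : ℕ} (y : ℝ → EuclideanSpace ℝ (Fin n)) (j : ℕ) (t : ℝ) : ℝ :=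
  Matrix.det (Matrix.of fun a b : Fin j =>
    (inner ℝ (iteratedDeriv (a.val + 1) y t) (iteratedDeriv (b.val + 1) y t) : ℝ))

/-- The `j`-th Frenet curvature `κ_j(t) = √(D_{j+1} D_{j-1}) / (D_j ‖y′(t)‖)` (for `j ≥ 1`). -/
noncomputable def frenetCurvature {n : ℕ} (y : ℝ → EuclideanSpace ℝ (Fin n)) (j : ℕ) (t : ℝ) :
    ℝ :=
  Real.sqrt (gramDet y (j + 1) t * gramDet y (j - 1) t) / (gramDet y j t * ‖deriv y t‖)

/-- The Plücker coordinates `w(t)` of the exterior product of `x′(t)` and `x″(t)`. -/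
noncomputable def oscW (x : ℝ → EuclideanSpace ℝ (Fin 4)) (t : ℝ) : EuclideanSpace ℝ (Fin 6) :=
  (WithLp.equiv 2 (Fin 6 → ℝ)).symm
    ![deriv x t 0 * deriv (deriv x) t 1 - deriv x t 1 * deriv (deriv x) t 0,
      deriv x t 0 * deriv (deriv x) t 2 - deriv x t 2 * deriv (deriv x) t 0,
      deriv x t 0 * deriv (deriv x) t 3 - deriv x t 3 * deriv (deriv x) t 0,
      deriv x t 1 * deriv (deriv x) t 2 - deriv x t 2 * deriv (deriv x) t 1,
      deriv x t 1 * deriv (deriv x) t 3 - deriv x t 3 * deriv (deriv x) t 1,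
      deriv x t 2 * deriv (deriv x) t 3 - deriv x t 3 * deriv (deriv x) t 2]

/-- The osculating indicatrix `x̃(t) = w(t) / ‖w(t)‖`. -/
noncomputable def oscInd (x : ℝ → EuclideanSpace ℝ (Fin 4)) (t : ℝ) :
    EuclideanSpace ℝ (Fin 6) :=
  ‖oscW x t‖⁻¹ • oscW x t

noncomputable def v4 (f0 f1 f2 f3 : ℝ → ℝ) : ℝ → EuclideanSpace ℝ (Fin 4) :=
  fun t => (WithLp.equiv 2 (Fin 4 → ℝ)).symm ![f0 t, f1 t, f2 t, f3 t]

lemma hasDerivAt_v4 {f0 f1 f2 f3 : ℝ → ℝ} {g0 g1 g2 g3 : ℝ} {t : ℝ}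
    (h0 : HasDerivAt f0 g0 t) (h1 : HasDerivAt f1 g1 t)
    (h2 : HasDerivAt f2 g2 t) (h3 : HasDerivAt f3 g3 t) :
    HasDerivAt (v4 f0 f1 f2 f3) ((WithLp.equiv 2 (Fin 4 → ℝ)).symm ![g0, g1, g2, g3]) t := by
  have hp : HasDerivAt (fun t => (![f0 t, f1 t, f2 t, f3 t] : Fin 4 → ℝ))
      ![g0, g1, g2, g3] t := by
    rw [hasDerivAt_pi]
    intro i
    fin_cases i <;> simpa
  have := ((PiLp.continuousLinearEquiv 2 ℝ (fun _ : Fin 4 => ℝ)).symm :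
      (Fin 4 → ℝ) →L[ℝ] EuclideanSpace ℝ (Fin 4)).hasFDerivAt.comp_hasDerivAt t hp
  exact this

lemma inner_v4 (p q r s u v w z : ℝ) :
    (inner ℝ ((WithLp.equiv 2 (Fin 4 → ℝ)).symm ![p,q,r,s])
      ((WithLp.equiv 2 (Fin 4 → ℝ)).symm ![u,v,w,z]) : ℝ) = p*u + q*v + r*w + s*z := by
  simp [PiLp.inner_apply, Fin.sum_univ_four, RCLike.inner_apply]; ring

lemma norm_v4 (p q r s : ℝ) :
    ‖(WithLp.equiv 2 (Fin 4 → ℝ)).symm ![p,q,r,s]‖ = Real.sqrt (p^2+q^2+r^2+s^2) := by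
  simp [EuclideanSpace.norm_eq, Fin.sum_univ_four, sq]

variable (a₁ a₂ : ℝ)

lemma HasDerivAt.cderiv {f : ℝ → ℝ} {a b t : ℝ} (h : HasDerivAt f a t) (e : a = b) :
    HasDerivAt f b t := e ▸ h

lemma hcos1 (a t : ℝ) : HasDerivAt (fun t => a * Real.cos t) (-(a * Real.sin t)) t := by
  simpa [mul_comm] using (Real.hasDerivAt_cos t).const_mul a
lemma hsin1 (a t : ℝ) : HasDerivAt (fun t => a * Real.sin t) (a * Real.cos t) t := by
  simpa [mul_comm] using (Real.hasDerivAt_sin t).const_mul a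
lemma hcos2 (a t : ℝ) : HasDerivAt (fun t => a * Real.cos (2*t)) (-(2 * a * Real.sin (2*t))) t := by
  have h2 : HasDerivAt (fun t : ℝ => 2*t) 2 t := by simpa using (hasDerivAt_id t).const_mul 2
  have := ((Real.hasDerivAt_cos (2*t)).comp t h2).const_mul a
  exact this.congr_deriv (by ring)
lemma hsin2 (a t : ℝ) : HasDerivAt (fun t => a * Real.sin (2*t)) (2 * a * Real.cos (2*t)) t := by
  have h2 : HasDerivAt (fun t : ℝ => 2*t) 2 t := by simpa using (hasDerivAt_id t).const_mul 2
  have := ((Real.hasDerivAt_sin (2*t)).comp t h2).const_mul a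
  exact this.congr_deriv (by ring)

lemma curveX_eq : curveX a₁ a₂ 1 2 = v4 (fun t => a₁ * Real.cos t) (fun t => a₁ * Real.sin t)
    (fun t => a₂ * Real.cos (2*t)) (fun t => a₂ * Real.sin (2*t)) := by
  funext t; simp [curveX, v4]

noncomputable def X1 : ℝ → EuclideanSpace ℝ (Fin 4) :=
  v4 (fun t => -(a₁ * Real.sin t)) (fun t => a₁ * Real.cos t)
    (fun t => -(2*a₂ * Real.sin (2*t))) (fun t => 2*a₂ * Real.cos (2*t))
noncomputable def X2 : ℝ → EuclideanSpace ℝ (Fin 4) :=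
  v4 (fun t => -(a₁ * Real.cos t)) (fun t => -(a₁ * Real.sin t))
    (fun t => -(4*a₂ * Real.cos (2*t))) (fun t => -(4*a₂ * Real.sin (2*t)))
noncomputable def X3 : ℝ → EuclideanSpace ℝ (Fin 4) :=
  v4 (fun t => a₁ * Real.sin t) (fun t => -(a₁ * Real.cos t))
    (fun t => 8*a₂ * Real.sin (2*t)) (fun t => -(8*a₂ * Real.cos (2*t)))
noncomputable def X4 : ℝ → EuclideanSpace ℝ (Fin 4) :=
  v4 (fun t => a₁ * Real.cos t) (fun t => a₁ * Real.sin t)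
    (fun t => 16*a₂ * Real.cos (2*t)) (fun t => 16*a₂ * Real.sin (2*t))

lemma deriv_curveX : deriv (curveX a₁ a₂ 1 2) = X1 a₁ a₂ := by
  funext t
  rw [curveX_eq]
  exact (hasDerivAt_v4 (hcos1 a₁ t) (hsin1 a₁ t) (hcos2 a₂ t) (hsin2 a₂ t)).deriv

lemma deriv_X1 : deriv (X1 a₁ a₂) = X2 a₁ a₂ := by
  funext t
  exact (hasDerivAt_v4 ((hsin1 a₁ t).neg.congr_deriv (by ring)) (hcos1 a₁ t)
    ((hsin2 (2*a₂) t).neg.congr_deriv (by ring))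
    ((hcos2 (2*a₂) t).congr_deriv (by ring))).deriv

lemma deriv_X2 : deriv (X2 a₁ a₂) = X3 a₁ a₂ := by
  funext t
  exact (hasDerivAt_v4 ((hcos1 a₁ t).neg.congr_deriv (by ring)) ((hsin1 a₁ t).neg.congr_deriv (by ring))
    ((hcos2 (4*a₂) t).neg.congr_deriv (by ring))
    ((hsin2 (4*a₂) t).neg.congr_deriv (by ring))).deriv

lemma deriv_X3 : deriv (X3 a₁ a₂) = X4 a₁ a₂ := by
  funext t
  exact (hasDerivAt_v4 ((hsin1 a₁ t).congr_deriv (by ring)) ((hcos1 a₁ t).neg.congr_deriv (by ring))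
    ((hsin2 (8*a₂) t).congr_deriv (by ring))
    ((hcos2 (8*a₂) t).neg.congr_deriv (by ring))).deriv

lemma iter1 : iteratedDeriv 1 (curveX a₁ a₂ 1 2) = X1 a₁ a₂ := by
  rw [iteratedDeriv_one, deriv_curveX]
lemma iter2 : iteratedDeriv 2 (curveX a₁ a₂ 1 2) = X2 a₁ a₂ := by
  rw [show (2:ℕ) = 1+1 from rfl, iteratedDeriv_succ, iter1, deriv_X1]
lemma iter3 : iteratedDeriv 3 (curveX a₁ a₂ 1 2) = X3 a₁ a₂ := by
  rw [show (3:ℕ) = 2+1 from rfl, iteratedDeriv_succ, iter2, deriv_X2]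
lemma iter4 : iteratedDeriv 4 (curveX a₁ a₂ 1 2) = X4 a₁ a₂ := by
  have : iteratedDeriv (3+1) (curveX a₁ a₂ 1 2) = X4 a₁ a₂ := by
    rw [iteratedDeriv_succ, iter3 a₁ a₂, deriv_X3]
  exact this

lemma gram0 (t : ℝ) : gramDet (curveX a₁ a₂ 1 2) 0 t = 1 := by
  simp [gramDet]

lemma gram1 (t : ℝ) : gramDet (curveX a₁ a₂ 1 2) 1 t = a₁^2 + 4*a₂^2 := by
  have hs := sin_sq_add_cos_sq t
  have hS := sin_sq_add_cos_sq (t*2)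
  rw [gramDet, Matrix.det_fin_one]
  norm_num [Matrix.of_apply, deriv_curveX, X1, v4, PiLp.inner_apply,
    PiLp.toLp_apply, Fin.sum_univ_four, EuclideanSpace.real_norm_sq_eq,
    Matrix.cons_val_zero, Matrix.cons_val_one, Matrix.head_cons,
    Matrix.cons_val_two, Matrix.cons_val_three, Matrix.tail_cons]
  ring_nf
  linear_combination a₁^2*hs + 4*a₂^2*hS

lemma gmat2 (t : ℝ) :
    (Matrix.of fun a b : Fin 2 =>
      (inner ℝ (iteratedDeriv (a.val + 1) (curveX a₁ a₂ 1 2) t)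
        (iteratedDeriv (b.val + 1) (curveX a₁ a₂ 1 2) t) : ℝ)) =
    !![a₁^2+4*a₂^2, 0; 0, a₁^2+16*a₂^2] := by
  have hs := sin_sq_add_cos_sq t
  have hS := sin_sq_add_cos_sq (t*2)
  ext a b
  fin_cases a <;> fin_cases b <;>
    norm_num [Matrix.of_apply, iter1, iter2, iter3, iter4, deriv_curveX,
      X1, X2, X3, X4, v4, PiLp.inner_apply, PiLp.toLp_apply, Fin.sum_univ_four,
      Matrix.cons_val_zero, Matrix.cons_val_one, Matrix.head_cons,
      Matrix.cons_val_two, Matrix.cons_val_three, Matrix.tail_cons] <;>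
    ring_nf <;>
    first
      | ring1
      | linear_combination a₁^2*hs + 4*a₂^2*hS
      | linear_combination a₁^2*hs + 16*a₂^2*hS
      | linear_combination a₁^2*hs + 64*a₂^2*hS
      | linear_combination a₁^2*hs + 256*a₂^2*hS
      | linear_combination (-a₁^2)*hs - 16*a₂^2*hS
      | linear_combination (-a₁^2)*hs - 64*a₂^2*hS

lemma gmat3 (t : ℝ) :
    (Matrix.of fun a b : Fin 3 =>
      (inner ℝ (iteratedDeriv (a.val + 1) (curveX a₁ a₂ 1 2) t)
        (iteratedDeriv (b.val + 1) (curveX a₁ a₂ 1 2) t) : ℝ)) =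
    !![a₁^2+4*a₂^2, 0, -(a₁^2+16*a₂^2);
       0, a₁^2+16*a₂^2, 0;
       -(a₁^2+16*a₂^2), 0, a₁^2+64*a₂^2] := by
  have hs := sin_sq_add_cos_sq t
  have hS := sin_sq_add_cos_sq (t*2)
  ext a b
  fin_cases a <;> fin_cases b <;>
    norm_num [Matrix.of_apply, iter1, iter2, iter3, iter4, deriv_curveX,
      X1, X2, X3, X4, v4, PiLp.inner_apply, PiLp.toLp_apply, Fin.sum_univ_four,
      Matrix.cons_val_zero, Matrix.cons_val_one, Matrix.head_cons,
      Matrix.cons_val_two, Matrix.cons_val_three, Matrix.tail_cons] <;>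
    ring_nf <;>
    first
      | ring1
      | linear_combination a₁^2*hs + 4*a₂^2*hS
      | linear_combination a₁^2*hs + 16*a₂^2*hS
      | linear_combination a₁^2*hs + 64*a₂^2*hS
      | linear_combination a₁^2*hs + 256*a₂^2*hS
      | linear_combination (-a₁^2)*hs - 16*a₂^2*hS
      | linear_combination (-a₁^2)*hs - 64*a₂^2*hS

lemma gmat4 (t : ℝ) :
    (Matrix.of fun a b : Fin 4 =>
      (inner ℝ (iteratedDeriv (a.val + 1) (curveX a₁ a₂ 1 2) t)
        (iteratedDeriv (b.val + 1) (curveX a₁ a₂ 1 2) t) : ℝ)) =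
    !![a₁^2+4*a₂^2, 0, -(a₁^2+16*a₂^2), 0;
       0, a₁^2+16*a₂^2, 0, -(a₁^2+64*a₂^2);
       -(a₁^2+16*a₂^2), 0, a₁^2+64*a₂^2, 0;
       0, -(a₁^2+64*a₂^2), 0, a₁^2+256*a₂^2] := by
  have hs := sin_sq_add_cos_sq t
  have hS := sin_sq_add_cos_sq (t*2)
  ext a b
  fin_cases a <;> fin_cases b <;>
    norm_num [Matrix.of_apply, iter1, iter2, iter3, iter4, deriv_curveX,
      X1, X2, X3, X4, v4, PiLp.inner_apply, PiLp.toLp_apply, Fin.sum_univ_four,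
      Matrix.cons_val_zero, Matrix.cons_val_one, Matrix.head_cons,
      Matrix.cons_val_two, Matrix.cons_val_three, Matrix.tail_cons] <;>
    ring_nf <;>
    first
      | ring1
      | linear_combination a₁^2*hs + 4*a₂^2*hS
      | linear_combination a₁^2*hs + 16*a₂^2*hS
      | linear_combination a₁^2*hs + 64*a₂^2*hS
      | linear_combination a₁^2*hs + 256*a₂^2*hS
      | linear_combination (-a₁^2)*hs - 16*a₂^2*hS
      | linear_combination (-a₁^2)*hs - 64*a₂^2*hS

lemma gram2 (t : ℝ) : gramDet (curveX a₁ a₂ 1 2) 2 t = (a₁^2+4*a₂^2)*(a₁^2+16*a₂^2) := by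
  rw [gramDet, gmat2, Matrix.det_fin_two_of]; ring

lemma gram3 (t : ℝ) : gramDet (curveX a₁ a₂ 1 2) 3 t = 36*a₁^2*a₂^2*(a₁^2+16*a₂^2) := by
  rw [gramDet, gmat3, Matrix.det_fin_three]
  simp [Matrix.cons_val_zero, Matrix.cons_val_one, Matrix.head_cons]
  ring

lemma gram4 (t : ℝ) : gramDet (curveX a₁ a₂ 1 2) 4 t = 5184*a₁^4*a₂^4 := by
  rw [gramDet, gmat4, Matrix.det_succ_row_zero]
  simp [Fin.sum_univ_succ, Matrix.det_fin_three, Matrix.submatrix, Fin.succAbove,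
    Matrix.cons_val_zero, Matrix.cons_val_one, Matrix.head_cons]
  ring

lemma norm_deriv (t : ℝ) : ‖deriv (curveX a₁ a₂ 1 2) t‖ = Real.sqrt (a₁^2 + 4*a₂^2) := by
  have hs := sin_sq_add_cos_sq t
  have hS := sin_sq_add_cos_sq (2*t)
  rw [deriv_curveX, X1, v4, norm_v4]
  congr 1
  linear_combination a₁^2*hs + 4*a₂^2*hS

theorem stmt1 (a₁ a₂ : ℝ) (ha₁ : 0 < a₁) (ha₂ : 0 < a₂) :
    (∫ t in (0:ℝ)..2 * Real.pi,
      Real.sqrt (frenetCurvature (curveX a₁ a₂ 1 2) 1 t ^ 2 + frenetCurvature (curveX a₁ a₂ 1 2) 2 t ^ 2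
        + frenetCurvature (curveX a₁ a₂ 1 2) 3 t ^ 2) * ‖deriv (curveX a₁ a₂ 1 2) t‖) = 2 * Real.sqrt 5 * Real.pi := by

  set A := a₁^2 with hAdef
  set B := a₂^2 with hBdef
  have hA : 0 < A := by positivity
  have hB : 0 < B := by positivity
  have hv2 : 0 < A + 4*B := by linarith
  have hP : 0 < A + 16*B := by linarith
  have key : ∀ t : ℝ,
      Real.sqrt (frenetCurvature (curveX a₁ a₂ 1 2) 1 t ^ 2
        + frenetCurvature (curveX a₁ a₂ 1 2) 2 t ^ 2
        + frenetCurvature (curveX a₁ a₂ 1 2) 3 t ^ 2)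
        * ‖deriv (curveX a₁ a₂ 1 2) t‖ = Real.sqrt 5 := by
    intro t
    rw [frenetCurvature, frenetCurvature, frenetCurvature]
    norm_num only [gram0, gram1, gram2, gram3, gram4, norm_deriv]
    rw [← hAdef, ← hBdef]
    have h1 : (Real.sqrt ((A+4*B)*(A+16*B)*1) / ((A+4*B) * Real.sqrt (A+4*B)))^2
        = (A+16*B) / ((A+4*B)^2) := by
      rw [div_pow, mul_pow, Real.sq_sqrt hv2.le, Real.sq_sqrt (by positivity)]
      field_simp
    have h2 : (Real.sqrt (36*A*B*(A+16*B) * (A+4*B)) / ((A+4*B)*(A+16*B) * Real.sqrt (A+4*B)))^2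
        = 36*A*B / ((A+4*B)^2*(A+16*B)^2) * (A+16*B) := by
      rw [div_pow, mul_pow, Real.sq_sqrt hv2.le, Real.sq_sqrt (by positivity)]
      field_simp
    have h3 : (Real.sqrt (5184*a₁^4*a₂^4 * ((A+4*B)*(A+16*B))) / (36*A*B*(A+16*B) * Real.sqrt (A+4*B)))^2
        = 4 / (A+16*B) := by
      rw [div_pow, mul_pow, Real.sq_sqrt hv2.le, Real.sq_sqrt (by positivity)]
      rw [div_eq_div_iff (by positivity) (by positivity), hAdef, hBdef]
      ring
    rw [h1, h2, h3]
    have hnn : 0 ≤ (A+16*B)/((A+4*B)^2) + 36*A*B/((A+4*B)^2*(A+16*B)^2)*(A+16*B) + 4/(A+16*B) :=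
      add_nonneg (add_nonneg (div_nonneg hP.le (by positivity))
        (mul_nonneg (div_nonneg (by nlinarith [mul_nonneg hA.le hB.le]) (by positivity)) hP.le))
        (div_nonneg (by norm_num) hP.le)
    rw [← Real.sqrt_mul hnn]
    congr 1
    field_simp
    ring
  rw [intervalIntegral.integral_congr (g := fun _ => Real.sqrt 5) (fun t _ => key t)]
  rw [intervalIntegral.integral_const]
  simp
  ring
end

section
/- For every t ∈ ℝ, the first Frenet curvature of the osculating indicatrix x̃ (as a curve in ℝ⁶) satisfies κ̃₁(t) = λ·√(α₁² + α₂²) / (a₁a₂α₁α₂·|α₁² − α₂²|); in particular κ̃₁ is constant. -/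
open Real intervalIntegral

/- ### Auxiliary machinery -/

noncomputable def eS {n : ℕ} (v : Fin n → ℝ) : EuclideanSpace ℝ (Fin n) :=
  (WithLp.equiv 2 (Fin n → ℝ)).symm v

lemma hasDerivAt_eS {n : ℕ} {f : ℝ → Fin n → ℝ} {f' : Fin n → ℝ} {t : ℝ}
    (h : ∀ i, HasDerivAt (fun s => f s i) (f' i) t) :
    HasDerivAt (fun s => eS (f s)) (eS f') t :=
  ((PiLp.continuousLinearEquiv 2 ℝ
      (fun _ : Fin n => ℝ)).symm.toContinuousLinearMap.hasFDerivAt).comp_hasDerivAt t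
    (hasDerivAt_pi.2 h)

lemma inner_eS {n : ℕ} (u v : Fin n → ℝ) : (inner ℝ (eS u) (eS v) : ℝ) = ∑ i, u i * v i := by
  simp [eS, PiLp.inner_apply, RCLike.inner_apply, WithLp.equiv_symm_apply, PiLp.toLp_apply]
  exact Finset.sum_congr rfl fun i _ => mul_comm _ _

lemma norm_eS {n : ℕ} (v : Fin n → ℝ) : ‖eS v‖ = Real.sqrt (∑ i, v i ^ 2) := by
  simp [eS, EuclideanSpace.norm_eq, WithLp.equiv_symm_apply, PiLp.toLp_apply, Real.norm_eq_abs, sq_abs]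

lemma hd_sin (c t : ℝ) : HasDerivAt (fun s => Real.sin (c*s)) (c * Real.cos (c*t)) t := by
  simpa [mul_comm, Function.comp_def] using (Real.hasDerivAt_sin (c*t)).comp t ((hasDerivAt_id t).const_mul c)

lemma hd_cos (c t : ℝ) : HasDerivAt (fun s => Real.cos (c*s)) (-(c * Real.sin (c*t))) t := by
  simpa [mul_comm, Function.comp_def] using (Real.hasDerivAt_cos (c*t)).comp t ((hasDerivAt_id t).const_mul c)

noncomputable def X1v (a₁ a₂ α₁ α₂ : ℝ) (s : ℝ) : Fin 4 → ℝ :=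
  ![-(a₁*α₁*Real.sin (α₁*s)), a₁*α₁*Real.cos (α₁*s),
    -(a₂*α₂*Real.sin (α₂*s)), a₂*α₂*Real.cos (α₂*s)]

noncomputable def X2v (a₁ a₂ α₁ α₂ : ℝ) (s : ℝ) : Fin 4 → ℝ :=
  ![-(a₁*α₁^2*Real.cos (α₁*s)), -(a₁*α₁^2*Real.sin (α₁*s)),
    -(a₂*α₂^2*Real.cos (α₂*s)), -(a₂*α₂^2*Real.sin (α₂*s))]

noncomputable def Wv (c0 c5 p q B G : ℝ) (s : ℝ) : Fin 6 → ℝ :=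
  ![c0,
    p*Real.sin (B*s) + q*Real.sin (G*s),
    -(p*Real.cos (B*s)) + q*Real.cos (G*s),
    -(p*Real.cos (B*s)) - q*Real.cos (G*s),
    -(p*Real.sin (B*s)) + q*Real.sin (G*s),
    c5]

noncomputable def W1v (p q B G : ℝ) (s : ℝ) : Fin 6 → ℝ :=
  ![0,
    p*B*Real.cos (B*s) + q*G*Real.cos (G*s),
    p*B*Real.sin (B*s) - q*G*Real.sin (G*s),
    p*B*Real.sin (B*s) + q*G*Real.sin (G*s),
    -(p*B*Real.cos (B*s)) + q*G*Real.cos (G*s),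
    0]

noncomputable def W2v (p q B G : ℝ) (s : ℝ) : Fin 6 → ℝ :=
  ![0,
    -(p*B^2*Real.sin (B*s)) - q*G^2*Real.sin (G*s),
    p*B^2*Real.cos (B*s) - q*G^2*Real.cos (G*s),
    p*B^2*Real.cos (B*s) + q*G^2*Real.cos (G*s),
    p*B^2*Real.sin (B*s) - q*G^2*Real.sin (G*s),
    0]

lemma hd_X (a₁ a₂ α₁ α₂ t : ℝ) :
    HasDerivAt (curveX a₁ a₂ α₁ α₂) (eS (X1v a₁ a₂ α₁ α₂ t)) t := by
  show HasDerivAt (fun s => eS ![a₁ * Real.cos (α₁ * s), a₁ * Real.sin (α₁ * s),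
      a₂ * Real.cos (α₂ * s), a₂ * Real.sin (α₂ * s)]) _ t
  apply hasDerivAt_eS
  intro i
  fin_cases i <;> simp [X1v]
  · have h := (hd_cos α₁ t).const_mul a₁; exact h.congr_deriv (by ring)
  · have h := (hd_sin α₁ t).const_mul a₁; exact h.congr_deriv (by ring)
  · have h := (hd_cos α₂ t).const_mul a₂; exact h.congr_deriv (by ring)
  · have h := (hd_sin α₂ t).const_mul a₂; exact h.congr_deriv (by ring)

lemma hd_X1 (a₁ a₂ α₁ α₂ t : ℝ) :
    HasDerivAt (fun s => eS (X1v a₁ a₂ α₁ α₂ s)) (eS (X2v a₁ a₂ α₁ α₂ t)) t := by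
  apply hasDerivAt_eS
  intro i
  fin_cases i <;> simp [X1v, X2v]
  · have h := ((hd_sin α₁ t).const_mul (a₁*α₁)).neg; exact h.congr_deriv (by ring)
  · have h := (hd_cos α₁ t).const_mul (a₁*α₁); exact h.congr_deriv (by ring)
  · have h := ((hd_sin α₂ t).const_mul (a₂*α₂)).neg; exact h.congr_deriv (by ring)
  · have h := (hd_cos α₂ t).const_mul (a₂*α₂); exact h.congr_deriv (by ring)

lemma hd_W (c0 c5 p q B G t : ℝ) :
    HasDerivAt (fun s => eS (Wv c0 c5 p q B G s)) (eS (W1v p q B G t)) t := by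
  apply hasDerivAt_eS
  intro i
  fin_cases i <;> simp [Wv, W1v]
  · exact hasDerivAt_const t c0
  · have h := ((hd_sin B t).const_mul p).add ((hd_sin G t).const_mul q)
    exact h.congr_deriv (by ring)
  · have h := (((hd_cos B t).const_mul p).neg).add ((hd_cos G t).const_mul q)
    exact h.congr_deriv (by ring)
  · have h := (((hd_cos B t).const_mul p).neg).sub ((hd_cos G t).const_mul q)
    exact h.congr_deriv (by ring)
  · have h := (((hd_sin B t).const_mul p).neg).add ((hd_sin G t).const_mul q)
    exact h.congr_deriv (by ring)
  · exact hasDerivAt_const t c5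

lemma hd_W1 (p q B G t : ℝ) :
    HasDerivAt (fun s => eS (W1v p q B G s)) (eS (W2v p q B G t)) t := by
  apply hasDerivAt_eS
  intro i
  fin_cases i <;> simp [W1v, W2v]
  · exact hasDerivAt_const t 0
  · have h := ((hd_cos B t).const_mul (p*B)).add ((hd_cos G t).const_mul (q*G))
    exact h.congr_deriv (by ring)
  · have h := ((hd_sin B t).const_mul (p*B)).sub ((hd_sin G t).const_mul (q*G))
    exact h.congr_deriv (by ring)
  · have h := ((hd_sin B t).const_mul (p*B)).add ((hd_sin G t).const_mul (q*G))
    exact h.congr_deriv (by ring)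
  · have h := (((hd_cos B t).const_mul (p*B)).neg).add ((hd_cos G t).const_mul (q*G))
    exact h.congr_deriv (by ring)
  · exact hasDerivAt_const t 0

/-- Key computation: the first Frenet curvature of `s ↦ lam⁻¹ • eS (Wv c0 c5 p q B G s)`. -/
lemma key (c0 c5 p q B G lam : ℝ) (hlam : 0 < lam)
    (hS : 0 < 2*p^2*B^2 + 2*q^2*G^2) (t : ℝ) :
    frenetCurvature (fun s => lam⁻¹ • eS (Wv c0 c5 p q B G s)) 1 t
      = lam * Real.sqrt (2*p^2*B^4 + 2*q^2*G^4) / (2*p^2*B^2 + 2*q^2*G^2) := by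
  set y : ℝ → EuclideanSpace ℝ (Fin 6) := fun s => lam⁻¹ • eS (Wv c0 c5 p q B G s) with hy
  have hd1 : ∀ s, HasDerivAt y (lam⁻¹ • eS (W1v p q B G s)) s :=
    fun s => (hd_W c0 c5 p q B G s).const_smul lam⁻¹
  have hy' : deriv y = fun s => lam⁻¹ • eS (W1v p q B G s) :=
    funext fun s => (hd1 s).deriv
  have hd2 : ∀ s, HasDerivAt (deriv y) (lam⁻¹ • eS (W2v p q B G s)) s := by
    rw [hy']; exact fun s => (hd_W1 p q B G s).const_smul lam⁻¹
  have it1 : iteratedDeriv 1 y t = lam⁻¹ • eS (W1v p q B G t) := by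
    rw [iteratedDeriv_one, hy']
  have it2 : iteratedDeriv 2 y t = lam⁻¹ • eS (W2v p q B G t) := by
    rw [iteratedDeriv_succ, iteratedDeriv_one]
    exact (hd2 t).deriv
  have hB := Real.sin_sq_add_cos_sq (B*t)
  have hG := Real.sin_sq_add_cos_sq (G*t)
  have hI11 : (inner ℝ (iteratedDeriv 1 y t) (iteratedDeriv 1 y t) : ℝ)
      = lam⁻¹^2 * (2*p^2*B^2 + 2*q^2*G^2) := by
    rw [it1, real_inner_smul_left, real_inner_smul_right, inner_eS]
    simp [W1v, Fin.sum_univ_succ]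
    linear_combination (lam⁻¹^2*2*p^2*B^2) * hB + (lam⁻¹^2*2*q^2*G^2) * hG
  have hI12 : (inner ℝ (iteratedDeriv 1 y t) (iteratedDeriv 2 y t) : ℝ) = 0 := by
    rw [it1, it2, real_inner_smul_left, real_inner_smul_right, inner_eS]
    have hz : (∑ i, W1v p q B G t i * W2v p q B G t i) = 0 := by
      simp [W1v, W2v, Fin.sum_univ_succ]
      try ring
    rw [hz, mul_zero, mul_zero]
  have hI22 : (inner ℝ (iteratedDeriv 2 y t) (iteratedDeriv 2 y t) : ℝ)
      = lam⁻¹^2 * (2*p^2*B^4 + 2*q^2*G^4) := by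
    rw [it2, real_inner_smul_left, real_inner_smul_right, inner_eS]
    simp [W2v, Fin.sum_univ_succ]
    linear_combination (lam⁻¹^2*2*p^2*B^4) * hB + (lam⁻¹^2*2*q^2*G^4) * hG
  have hI21 : (inner ℝ (iteratedDeriv 2 y t) (iteratedDeriv 1 y t) : ℝ) = 0 := by
    rw [real_inner_comm]; exact hI12
  have hD1 : gramDet y 1 t = lam⁻¹^2 * (2*p^2*B^2 + 2*q^2*G^2) := by
    have e : gramDet y 1 t = (inner ℝ (iteratedDeriv 1 y t) (iteratedDeriv 1 y t) : ℝ) := by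
      unfold gramDet
      rw [Matrix.det_fin_one]
      rfl
    rw [e, hI11]
  have hD2 : gramDet y 2 t
      = (lam⁻¹^2 * (2*p^2*B^2 + 2*q^2*G^2)) * (lam⁻¹^2 * (2*p^2*B^4 + 2*q^2*G^4)) := by
    have e : gramDet y 2 t
        = (inner ℝ (iteratedDeriv 1 y t) (iteratedDeriv 1 y t) : ℝ)
            * (inner ℝ (iteratedDeriv 2 y t) (iteratedDeriv 2 y t) : ℝ)
          - (inner ℝ (iteratedDeriv 1 y t) (iteratedDeriv 2 y t) : ℝ)
            * (inner ℝ (iteratedDeriv 2 y t) (iteratedDeriv 1 y t) : ℝ) := by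
      unfold gramDet
      rw [Matrix.det_fin_two]
      rfl
    rw [e, hI11, hI12, hI21, hI22]
    ring
  have hD0 : gramDet y 0 t = 1 := by
    unfold gramDet
    exact Matrix.det_fin_zero
  have hnorm : ‖deriv y t‖ = lam⁻¹ * Real.sqrt (2*p^2*B^2 + 2*q^2*G^2) := by
    rw [hy']
    rw [norm_smul, Real.norm_eq_abs, abs_of_pos (inv_pos.2 hlam), norm_eS]
    congr 1
    congr 1
    simp [W1v, Fin.sum_univ_succ]
    linear_combination (2*p^2*B^2) * hB + (2*q^2*G^2) * hG
  show Real.sqrt (gramDet y 2 t * gramDet y 0 t) / (gramDet y 1 t * ‖deriv y t‖) = _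
  rw [hD2, hD0, hD1, hnorm, mul_one]
  have hsq : Real.sqrt (lam⁻¹ ^ 2 * (2*p^2*B^2 + 2*q^2*G^2) * (lam⁻¹ ^ 2 * (2*p^2*B^4 + 2*q^2*G^4)))
      = lam⁻¹^2 * (Real.sqrt (2*p^2*B^2 + 2*q^2*G^2) * Real.sqrt (2*p^2*B^4 + 2*q^2*G^4)) := by
    rw [show lam⁻¹ ^ 2 * (2*p^2*B^2 + 2*q^2*G^2) * (lam⁻¹ ^ 2 * (2*p^2*B^4 + 2*q^2*G^4))
        = (lam⁻¹^2)^2 * ((2*p^2*B^2 + 2*q^2*G^2) * (2*p^2*B^4 + 2*q^2*G^4)) by ring]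
    rw [Real.sqrt_mul (by positivity), Real.sqrt_sq (by positivity),
      Real.sqrt_mul hS.le]
  rw [hsq]
  have hs : 0 < Real.sqrt (2*p^2*B^2 + 2*q^2*G^2) := Real.sqrt_pos.2 hS
  have hden : (0:ℝ) < lam⁻¹^2 * (2*p^2*B^2 + 2*q^2*G^2) * (lam⁻¹ * Real.sqrt (2*p^2*B^2 + 2*q^2*G^2)) :=
    mul_pos (mul_pos (pow_pos (inv_pos.2 hlam) 2) hS) (mul_pos (inv_pos.2 hlam) hs)
  rw [div_eq_div_iff hden.ne' hS.ne']
  have hlne : lam ≠ 0 := hlam.ne'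
  field_simp

theorem stmt14 (a₁ a₂ α₁ α₂ : ℝ) (ha₁ : 0 < a₁) (ha₂ : 0 < a₂)
    (hα₁ : 0 < α₁) (hα₂ : 0 < α₂) (hne : α₁ ≠ α₂) (lam : ℝ)
    (hlam : lam = Real.sqrt (a₁ ^ 2 * α₁ ^ 2 + a₂ ^ 2 * α₂ ^ 2) * Real.sqrt (a₁ ^ 2 * α₁ ^ 4 + a₂ ^ 2 * α₂ ^ 4)) :
    ∀ t : ℝ, frenetCurvature (oscInd (curveX a₁ a₂ α₁ α₂)) 1 t
      = lam * Real.sqrt (α₁ ^ 2 + α₂ ^ 2) / (a₁ * a₂ * α₁ * α₂ * |α₁ ^ 2 - α₂ ^ 2|) := by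
  intro t
  have hΔ : α₁ ^ 2 - α₂ ^ 2 ≠ 0 := by
    intro h
    have h2 : (α₁ - α₂) * (α₁ + α₂) = 0 := by linear_combination h
    rcases mul_eq_zero.1 h2 with h3 | h3
    · exact hne (by linarith)
    · linarith
  have hlam0 : 0 < lam := by
    rw [hlam]
    have h1 : (0:ℝ) < a₁^2*α₁^2 + a₂^2*α₂^2 := by positivity
    have h2 : (0:ℝ) < a₁^2*α₁^4 + a₂^2*α₂^4 := by positivity
    exact mul_pos (Real.sqrt_pos.2 h1) (Real.sqrt_pos.2 h2)
  have hlamsq : lam^2 = (a₁^2*α₁^2 + a₂^2*α₂^2) * (a₁^2*α₁^4 + a₂^2*α₂^4) := by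
    rw [hlam, mul_pow, Real.sq_sqrt (by positivity), Real.sq_sqrt (by positivity)]
  set B : ℝ := α₁+α₂ with hBdef
  set G : ℝ := α₁-α₂ with hGdef
  have hdx : deriv (curveX a₁ a₂ α₁ α₂) = fun s => eS (X1v a₁ a₂ α₁ α₂ s) :=
    funext fun s => (hd_X a₁ a₂ α₁ α₂ s).deriv
  have hddx : deriv (deriv (curveX a₁ a₂ α₁ α₂)) = fun s => eS (X2v a₁ a₂ α₁ α₂ s) := by
    rw [hdx]; exact funext fun s => (hd_X1 a₁ a₂ α₁ α₂ s).deriv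
  have hW : ∀ s, oscW (curveX a₁ a₂ α₁ α₂) s
      = eS (Wv (a₁^2*α₁^3) (a₂^2*α₂^3) (a₁*a₂*α₁*α₂*(α₂-α₁)/2) (a₁*a₂*α₁*α₂*(α₁+α₂)/2)
          B G s) := by
    intro s
    unfold oscW
    rw [hddx, hdx]
    apply congrArg
    have h1 := Real.sin_sq_add_cos_sq (α₁*s)
    have h2 := Real.sin_sq_add_cos_sq (α₂*s)
    have hsB : Real.sin (B*s) = Real.sin (α₁*s)*Real.cos (α₂*s) + Real.cos (α₁*s)*Real.sin (α₂*s) := by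
      rw [hBdef, show (α₁+α₂)*s = α₁*s + α₂*s by ring, Real.sin_add]
    have hsG : Real.sin (G*s) = Real.sin (α₁*s)*Real.cos (α₂*s) - Real.cos (α₁*s)*Real.sin (α₂*s) := by
      rw [hGdef, show (α₁-α₂)*s = α₁*s - α₂*s by ring, Real.sin_sub]
    have hcB : Real.cos (B*s) = Real.cos (α₁*s)*Real.cos (α₂*s) - Real.sin (α₁*s)*Real.sin (α₂*s) := by
      rw [hBdef, show (α₁+α₂)*s = α₁*s + α₂*s by ring, Real.cos_add]
    have hcG : Real.cos (G*s) = Real.cos (α₁*s)*Real.cos (α₂*s) + Real.sin (α₁*s)*Real.sin (α₂*s) := by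
      rw [hGdef, show (α₁-α₂)*s = α₁*s - α₂*s by ring, Real.cos_sub]
    funext i
    fin_cases i <;> norm_num [Wv, X1v, X2v, eS, WithLp.equiv_symm_apply, PiLp.toLp_apply, Matrix.cons_val_succ, Matrix.cons_val_two, Matrix.cons_val_three]
    · linear_combination (a₁^2*α₁^3) * h1
    · linear_combination (-(a₁*a₂*α₁*α₂*(α₂-α₁)/2)) * hsB + (-(a₁*a₂*α₁*α₂*(α₁+α₂)/2)) * hsG
    · linear_combination (a₁*a₂*α₁*α₂*(α₂-α₁)/2) * hcB + (-(a₁*a₂*α₁*α₂*(α₁+α₂)/2)) * hcG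
    · linear_combination (a₁*a₂*α₁*α₂*(α₂-α₁)/2) * hcB + (a₁*a₂*α₁*α₂*(α₁+α₂)/2) * hcG
    · linear_combination (a₁*a₂*α₁*α₂*(α₂-α₁)/2) * hsB + (-(a₁*a₂*α₁*α₂*(α₁+α₂)/2)) * hsG
    · linear_combination (a₂^2*α₂^3) * h2
  have hnormW : ∀ s, ‖oscW (curveX a₁ a₂ α₁ α₂) s‖ = lam := by
    intro s
    rw [hW s, norm_eS]
    have hBs := Real.sin_sq_add_cos_sq (B*s)
    have hGs := Real.sin_sq_add_cos_sq (G*s)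
    have hsum : ∑ i, (Wv (a₁^2*α₁^3) (a₂^2*α₂^3) (a₁*a₂*α₁*α₂*(α₂-α₁)/2)
        (a₁*a₂*α₁*α₂*(α₁+α₂)/2) B G s) i ^ 2 = lam ^ 2 := by
      simp [Wv, Fin.sum_univ_succ]
      rw [hlamsq]
      linear_combination (2*(a₁*a₂*α₁*α₂*(α₂-α₁)/2)^2) * hBs
        + (2*(a₁*a₂*α₁*α₂*(α₁+α₂)/2)^2) * hGs
    rw [hsum, Real.sqrt_sq hlam0.le]
  have hfun : oscInd (curveX a₁ a₂ α₁ α₂)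
      = fun s => lam⁻¹ • eS (Wv (a₁^2*α₁^3) (a₂^2*α₂^3) (a₁*a₂*α₁*α₂*(α₂-α₁)/2)
          (a₁*a₂*α₁*α₂*(α₁+α₂)/2) B G s) := by
    funext s
    unfold oscInd
    rw [hnormW s, hW s]
  rw [hfun]
  have habs : (a₁*a₂*α₁*α₂*|α₁^2-α₂^2|)^2 = (a₁*a₂*α₁*α₂)^2*(α₁^2-α₂^2)^2 := by
    rw [mul_pow, sq_abs]
  have hk : 0 < a₁*a₂*α₁*α₂*|α₁^2-α₂^2| := by
    have := abs_pos.2 hΔ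
    positivity
  have hS : 0 < 2*(a₁*a₂*α₁*α₂*(α₂-α₁)/2)^2*B^2 + 2*(a₁*a₂*α₁*α₂*(α₁+α₂)/2)^2*G^2 := by
    have h2 : 2*(a₁*a₂*α₁*α₂*(α₂-α₁)/2)^2*B^2 + 2*(a₁*a₂*α₁*α₂*(α₁+α₂)/2)^2*G^2
        = (a₁*a₂*α₁*α₂*|α₁^2-α₂^2|)^2 := by
      rw [habs, hBdef, hGdef]; ring
    rw [h2]
    positivity
  rw [key (a₁^2*α₁^3) (a₂^2*α₂^3) (a₁*a₂*α₁*α₂*(α₂-α₁)/2) (a₁*a₂*α₁*α₂*(α₁+α₂)/2)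
    B G lam hlam0 hS t]
  have h1 : 2*(a₁*a₂*α₁*α₂*(α₂-α₁)/2)^2*B^4 + 2*(a₁*a₂*α₁*α₂*(α₁+α₂)/2)^2*G^4
      = (a₁*a₂*α₁*α₂*|α₁^2-α₂^2|)^2 * (α₁^2+α₂^2) := by
    rw [habs, hBdef, hGdef]; ring
  have h2 : 2*(a₁*a₂*α₁*α₂*(α₂-α₁)/2)^2*B^2 + 2*(a₁*a₂*α₁*α₂*(α₁+α₂)/2)^2*G^2
      = (a₁*a₂*α₁*α₂*|α₁^2-α₂^2|)^2 := by
    rw [habs, hBdef, hGdef]; ring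
  rw [h1, h2, Real.sqrt_mul (by positivity), Real.sqrt_sq hk.le]
  field_simp
end
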